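/- Riemann's bilinear relations in genus g: for all σ, ε ∈ 𝔽₂^g and τ ∈ ℍ_g, Θ[σ](τ)·Θ[σ+ε](τ) = 2^{-g} Σ_{ε'∈𝔽₂^g} (-1)^{ᵗσε'} θ[ε;ε'](τ)², where Θ[a](τ) = θ[a;0](2τ). -/

import Mathlib

open Matrix Complex

variable (g : ℕ)

/-- The theta constant with characteristic m = (m'; m'') ∈ 𝔽₂^{2g} (canonical 0,1 lifts):
θ[m';m''](τ) = Σ_{n∈ℤ^g} exp(2πi(½·ᵗ(n+m'/2)·τ·(n+m'/2) + ᵗ(n+m'/2)·(m''/2))). -/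
noncomputable def thetaConst (m' m'' : Fin g → ZMod 2)
    (τ : Matrix (Fin g) (Fin g) ℂ) : ℂ :=
  ∑' n : Fin g → ℤ,
    Complex.exp (2 * Real.pi * Complex.I *
      ((1 / 2) * ((fun i => (n i : ℂ) + ((m' i).val : ℂ) / 2) ⬝ᵥ
          (τ *ᵥ fun i => (n i : ℂ) + ((m' i).val : ℂ) / 2)) +
        (fun i => (n i : ℂ) + ((m' i).val : ℂ) / 2) ⬝ᵥ (fun i => ((m'' i).val : ℂ) / 2)))

/-- The second order theta constant Θ[a](τ) = θ[a;0](2τ). -/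
noncomputable def secondOrderTheta (a : Fin g → ZMod 2)
    (τ : Matrix (Fin g) (Fin g) ℂ) : ℂ :=
  thetaConst g a 0 ((2 : ℂ) • τ)

namespace RBR
open Real

lemma quad_lb {g : ℕ} {B : Matrix (Fin g) (Fin g) ℝ} (hB : B.PosDef) :
    ∃ c > 0, ∀ x : Fin g → ℝ, c * (∑ i, x i ^ 2) ≤ x ⬝ᵥ (B *ᵥ x) := by
  have hquad : ∀ x : Fin g → ℝ, x ≠ 0 → 0 < x ⬝ᵥ (B *ᵥ x) := by
    intro x hx
    have := hB.re_dotProduct_pos (x := x) hx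
    simpa using this
  by_cases hg : IsEmpty (Fin g)
  · refine ⟨1, one_pos, fun x => ?_⟩
    simp [dotProduct, Finset.univ_eq_empty]
  · rw [not_isEmpty_iff] at hg
    haveI := hg
    haveI : Nontrivial (Fin g → ℝ) := ⟨⟨0, fun _ => 1, by
      intro h; have := congrFun h hg.some; simp at this⟩⟩
    set q : (Fin g → ℝ) → ℝ := fun x => x ⬝ᵥ (B *ᵥ x) with hq
    have hqc : Continuous q := by
      simp only [hq, dotProduct, mulVec]
      fun_prop
    obtain ⟨x₀, hx₀s, hmin⟩ := (isCompact_sphere (0 : Fin g → ℝ) 1).exists_isMinOn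
      (NormedSpace.sphere_nonempty.mpr zero_le_one) hqc.continuousOn
    have hx₀n : ‖x₀‖ = 1 := by simpa using hx₀s
    have hx₀ : x₀ ≠ 0 := by intro h; rw [h] at hx₀n; simp at hx₀n
    have hm : 0 < q x₀ := hquad _ hx₀
    have hgpos : (0:ℝ) < g := by
      have := hg.some
      exact_mod_cast Nat.pos_of_ne_zero (by rintro rfl; exact absurd this.2 (by simp))
    refine ⟨q x₀ / g, div_pos hm hgpos, fun x => ?_⟩
    by_cases hx : x = 0
    · simp [hx, hq, dotProduct]
    · have hr : 0 < ‖x‖ := norm_pos_iff.mpr hx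
      have hy : (‖x‖⁻¹ • x) ∈ Metric.sphere (0 : Fin g → ℝ) 1 := by
        simp [norm_smul, abs_of_pos (inv_pos.mpr hr), inv_mul_cancel₀ hr.ne']
      have hsc : q (‖x‖⁻¹ • x) = ‖x‖⁻¹ ^ 2 * q x := by
        simp only [hq]
        rw [mulVec_smul, dotProduct_smul, smul_dotProduct]
        simp [smul_eq_mul]; ring
      have h1 : q x₀ ≤ ‖x‖⁻¹ ^ 2 * q x := by
        rw [← hsc]; exact hmin hy
      have h2 : q x₀ * ‖x‖ ^ 2 ≤ q x := by
        have := mul_le_mul_of_nonneg_right h1 (sq_nonneg ‖x‖)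
        calc q x₀ * ‖x‖ ^ 2 ≤ ‖x‖⁻¹ ^ 2 * q x * ‖x‖ ^ 2 := this
          _ = q x := by field_simp
      have h3 : (∑ i, x i ^ 2) ≤ g * ‖x‖ ^ 2 := by
        calc (∑ i, x i ^ 2) ≤ ∑ _i : Fin g, ‖x‖ ^ 2 := by
              refine Finset.sum_le_sum fun i _ => ?_
              have := norm_le_pi_norm x i
              calc x i ^ 2 = ‖x i‖ ^ 2 := by rw [Real.norm_eq_abs, _root_.sq_abs]
                _ ≤ ‖x‖ ^ 2 := by nlinarith [norm_nonneg (x i), norm_nonneg x]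
          _ = g * ‖x‖ ^ 2 := by simp [Finset.sum_const, nsmul_eq_mul]
      calc q x₀ / g * (∑ i, x i ^ 2) ≤ q x₀ / g * (g * ‖x‖ ^ 2) := by
            apply mul_le_mul_of_nonneg_left h3 (le_of_lt (div_pos hm hgpos))
        _ = q x₀ * ‖x‖ ^ 2 := by field_simp
        _ ≤ q x := h2

lemma summable_gauss_one (a : ℝ) (ha : 0 < a) (c : ℝ) :
    Summable fun n : ℤ => Real.exp (-a * ((n : ℝ) + c) ^ 2) := by
  have hT : 0 < a / π := div_pos ha Real.pi_pos
  have H := (summable_pow_mul_jacobiTheta₂_term_bound (a * |c| / π) hT 0).mul_left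
    (Real.exp (a * c ^ 2))
  refine H.of_nonneg_of_le (fun n => (Real.exp_pos _).le) (fun n => ?_)
  rw [pow_zero, one_mul, ← Real.exp_add, Real.exp_le_exp]
  rw [Int.cast_abs]
  have hcn : -(c * (n:ℝ)) ≤ |c| * |(n:ℝ)| := by rw [← abs_mul]; exact neg_le_abs _
  have hexp : -π * (a / π * (n:ℝ) ^ 2 - 2 * (a * |c| / π) * |(n:ℝ)|)
      = -a * (n:ℝ)^2 + 2*a*|c| * |(n:ℝ)| := by field_simp; ring
  rw [hexp]
  have h2 := mul_le_mul_of_nonneg_left hcn ha.le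
  nlinarith [h2, sq_nonneg c, ha.le]

lemma summable_pi_prod : ∀ (g : ℕ) (f : Fin g → ℤ → ℝ), (∀ i x, 0 ≤ f i x) →
    (∀ i, Summable (f i)) → Summable fun v : Fin g → ℤ => ∏ i, f i (v i) := by
  intro g
  induction g with
  | zero => intro f _ _; exact Summable.of_finite
  | succ n ih =>
    intro f hnn hs
    have key := Summable.mul_of_nonneg (hs 0) (ih (fun i => f i.succ)
        (fun i x => hnn _ _) (fun i => hs _)) (fun x => hnn _ _)
        (fun v => Finset.prod_nonneg fun i _ => hnn _ _)
    refine ((Fin.consEquiv fun _ => ℤ).summable_iff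
      (f := fun v : Fin (n+1) → ℤ => ∏ i, f i (v i))).mp (key.congr fun pv => ?_)
    rw [Function.comp_apply, Fin.prod_univ_succ]
    simp [Fin.consEquiv, Fin.cons_zero, Fin.cons_succ]

lemma summable_norm_theta {g : ℕ} {M : Matrix (Fin g) (Fin g) ℂ}
    (hM : ∃ c > 0, ∀ x : Fin g → ℝ,
      c * (∑ i, x i ^ 2) ≤ x ⬝ᵥ ((M.map Complex.im) *ᵥ x)) (c d : Fin g → ℝ) :
    Summable fun n : Fin g → ℤ => ‖Complex.exp (2 * (Real.pi:ℂ) * Complex.I *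
      ((1 / 2) * ((fun i => (n i : ℂ) + (c i : ℂ)) ⬝ᵥ (M *ᵥ fun i => (n i : ℂ) + (c i : ℂ))) +
        (fun i => (n i : ℂ) + (c i : ℂ)) ⬝ᵥ (fun i => (d i : ℂ))))‖ := by
  obtain ⟨c₀, hc₀, hlb⟩ := hM
  have hnorm : ∀ n : Fin g → ℤ, ‖Complex.exp (2 * (Real.pi:ℂ) * Complex.I *
      ((1 / 2) * ((fun i => (n i : ℂ) + (c i : ℂ)) ⬝ᵥ (M *ᵥ fun i => (n i : ℂ) + (c i : ℂ))) +
        (fun i => (n i : ℂ) + (c i : ℂ)) ⬝ᵥ (fun i => (d i : ℂ))))‖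
      = Real.exp (-Real.pi * ((fun i => (n i : ℝ) + c i) ⬝ᵥ ((M.map Complex.im) *ᵥ
        (fun i => (n i : ℝ) + c i)))) := by
    intro n
    rw [Complex.norm_exp]
    congr 1
    simp only [dotProduct, mulVec, map_apply, Finset.mul_sum]
    simp [Complex.mul_re, Complex.mul_im, Complex.re_sum, Complex.im_sum, Finset.mul_sum]
    refine Finset.sum_congr rfl fun i _ => Finset.sum_congr rfl fun j _ => by ring
  have hmaj := summable_pi_prod g (fun i x => Real.exp (-(Real.pi * c₀) * ((x : ℝ) + c i) ^ 2))
    (fun i x => (Real.exp_pos _).le)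
    (fun i => summable_gauss_one _ (mul_pos Real.pi_pos hc₀) _)
  refine hmaj.of_nonneg_of_le (fun n => norm_nonneg _) (fun n => ?_)
  rw [hnorm n]
  have h1 : -Real.pi * ((fun i => (n i : ℝ) + c i) ⬝ᵥ ((M.map Complex.im) *ᵥ
      (fun i => (n i : ℝ) + c i))) ≤ ∑ i, (-(Real.pi * c₀) * ((n i : ℝ) + c i) ^ 2) := by
    have hle := hlb (fun i => (n i : ℝ) + c i)
    have hπ := Real.pi_pos
    rw [← Finset.mul_sum]
    have h2 := mul_le_mul_of_nonneg_left hle hπ.le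
    nlinarith [h2]
  calc Real.exp _ ≤ Real.exp (∑ i, (-(Real.pi * c₀) * ((n i : ℝ) + c i) ^ 2)) :=
        Real.exp_le_exp.mpr h1
    _ = ∏ i, Real.exp (-(Real.pi * c₀) * ((n i : ℝ) + c i) ^ 2) := Real.exp_sum _ _


variable {g : ℕ}

noncomputable def ee (z : ℂ) : ℂ := Complex.exp (2 * (Real.pi : ℂ) * Complex.I * z)

noncomputable def Qf (τ : Matrix (Fin g) (Fin g) ℂ) (x : Fin g → ℂ) : ℂ := x ⬝ᵥ (τ *ᵥ x)

noncomputable def vc (a : Fin g → ZMod 2) (p : Fin g → ℤ) : Fin g → ℂ :=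
  fun i => (p i : ℂ) + ((a i).val : ℂ) / 2

noncomputable def wc (b : Fin g → ZMod 2) : Fin g → ℂ := fun i => ((b i).val : ℂ) / 2

lemma theta_eq (a b : Fin g → ZMod 2) (τ : Matrix (Fin g) (Fin g) ℂ) :
    thetaConst g a b τ = ∑' n : Fin g → ℤ,
      ee ((1 / 2) * Qf τ (vc a n) + vc a n ⬝ᵥ wc b) := rfl

lemma ee_mul (z w : ℂ) : ee z * ee w = ee (z + w) := by
  rw [ee, ee, ee, ← Complex.exp_add, mul_add]

lemma so_eq (a : Fin g → ZMod 2) (τ : Matrix (Fin g) (Fin g) ℂ) :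
    secondOrderTheta g a τ = ∑' n : Fin g → ℤ, ee (Qf τ (vc a n)) := by
  rw [secondOrderTheta, theta_eq]
  refine tsum_congr fun n => ?_
  congr 1
  have h0 : wc (0 : Fin g → ZMod 2) = (0 : Fin g → ℂ) := by
    funext i
    simp [wc]
  rw [h0, dotProduct_zero, add_zero, Qf, Qf, smul_mulVec, dotProduct_smul]
  simp [smul_eq_mul]

section Main
variable (σ ε : Fin g → ZMod 2) (τ : Matrix (Fin g) (Fin g) ℂ)

def tI (i : Fin g) : ℤ := ((σ i).val : ℤ) * (1 - ((ε i).val : ℤ))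
def sI (i : Fin g) : ℤ := ((σ i).val : ℤ) * ((ε i).val : ℤ) - ((ε i).val : ℤ)

def bmap (pq : (Fin g → ℤ) × (Fin g → ℤ)) : (Fin g → ℤ) × (Fin g → ℤ) :=
  (fun i => pq.1 i + pq.2 i + tI σ ε i, fun i => pq.1 i - pq.2 i + sI σ ε i)

def cI (n m : Fin g → ℤ) (i : Fin g) : ℤ :=
  ((σ i).val : ℤ) + n i + m i + ((ε i).val : ℤ)

lemma bmap_inj : Function.Injective (bmap σ ε) := by
  rintro ⟨p, q⟩ ⟨p', q'⟩ h
  simp only [bmap, Prod.mk.injEq] at h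
  obtain ⟨h1, h2⟩ := h
  have e1 : ∀ i, p i + q i = p' i + q' i := fun i => by
    have := congrFun h1 i; omega
  have e2 : ∀ i, p i - q i = p' i - q' i := fun i => by
    have := congrFun h2 i; omega
  have hp : p = p' := funext fun i => by have := e1 i; have := e2 i; omega
  have hq : q = q' := funext fun i => by have := e1 i; have := e2 i; omega
  rw [Prod.mk.injEq]
  exact ⟨hp, hq⟩

lemma z1 : ∀ a b : ZMod 2,
    2 * ((a.val : ℤ) * (1 - (b.val : ℤ))) = (a.val : ℤ) + ((a + b).val : ℤ) - (b.val : ℤ) := by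
  decide

lemma z2 : ∀ a b : ZMod 2,
    2 * ((a.val : ℤ) * (b.val : ℤ) - (b.val : ℤ))
      = (a.val : ℤ) - ((a + b).val : ℤ) - (b.val : ℤ) := by
  decide

lemma vec1 (p q : Fin g → ℤ) :
    vc ε (bmap σ ε (p, q)).1 = vc σ p + vc (σ + ε) q := by
  funext i
  simp only [vc, bmap, Pi.add_apply]
  have hz : (2 * tI σ ε i : ℤ)
      = ((σ i).val : ℤ) + (((σ + ε) i).val : ℤ) - ((ε i).val : ℤ) := by
    simpa [tI, Pi.add_apply] using z1 (σ i) (ε i)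
  have hzc : (2 * (tI σ ε i : ℂ))
      = ((σ i).val : ℂ) + (((σ + ε) i).val : ℂ) - ((ε i).val : ℂ) := by
    exact_mod_cast congrArg (fun k : ℤ => (k : ℂ)) hz
  push_cast
  linear_combination hzc / 2

lemma vec2 (p q : Fin g → ℤ) :
    vc ε (bmap σ ε (p, q)).2 = vc σ p - vc (σ + ε) q := by
  funext i
  simp only [vc, bmap, Pi.sub_apply]
  have hz : (2 * sI σ ε i : ℤ)
      = ((σ i).val : ℤ) - (((σ + ε) i).val : ℤ) - ((ε i).val : ℤ) := by
    simpa [sI, Pi.add_apply] using z2 (σ i) (ε i)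
  have hzc : (2 * (sI σ ε i : ℂ))
      = ((σ i).val : ℂ) - (((σ + ε) i).val : ℂ) - ((ε i).val : ℂ) := by
    exact_mod_cast congrArg (fun k : ℤ => (k : ℂ)) hz
  push_cast
  linear_combination hzc / 2

lemma symQ (hτsymm : τᵀ = τ) (u v : Fin g → ℂ) : u ⬝ᵥ (τ *ᵥ v) = v ⬝ᵥ (τ *ᵥ u) := by
  conv_lhs => rw [dotProduct_mulVec, ← hτsymm, vecMul_transpose]
  exact dotProduct_comm _ _

lemma polar (u v : Fin g → ℂ) :
    Qf τ (u + v) + Qf τ (u - v) = 2 * Qf τ u + 2 * Qf τ v := by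
  simp only [Qf, mulVec_add, mulVec_sub, dotProduct_add, dotProduct_sub,
    add_dotProduct, sub_dotProduct]
  ring

lemma exp_eq (p q : Fin g → ℤ) :
    ee (Qf τ (vc σ p)) * ee (Qf τ (vc (σ + ε) q))
      = ee ((1 / 2) * Qf τ (vc ε (bmap σ ε (p, q)).1)
          + (1 / 2) * Qf τ (vc ε (bmap σ ε (p, q)).2)) := by
  rw [ee_mul]
  congr 1
  rw [vec1, vec2]
  have h := polar τ (vc σ p) (vc (σ + ε) q)
  linear_combination -h / 2

lemma mem_range (n m : Fin g → ℤ) (h : ∀ i, Even (cI σ ε n m i)) :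
    (n, m) ∈ Set.range (bmap σ ε) := by
  choose k hk using h
  refine ⟨(fun i => k i - ((σ i).val : ℤ),
    fun i => k i - m i - ((σ i).val : ℤ) - ((ε i).val : ℤ)
      + ((σ i).val : ℤ) * ((ε i).val : ℤ)), ?_⟩
  rw [bmap, Prod.mk.injEq]
  constructor <;> funext i <;>
  · have hki := hk i
    simp only [cI] at hki
    have hσ : ((σ i).val : ℤ) = 0 ∨ ((σ i).val : ℤ) = 1 := by
      have h2 : (σ i).val < 2 := ZMod.val_lt (σ i)
      omega
    have hε : ((ε i).val : ℤ) = 0 ∨ ((ε i).val : ℤ) = 1 := by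
      have h2 : (ε i).val < 2 := ZMod.val_lt (ε i)
      omega
    simp only [tI, sI]
    rcases hσ with hσ | hσ <;> rcases hε with hε | hε <;> rw [hσ, hε] at hki ⊢ <;> omega

lemma cI_bmap (p q : Fin g → ℤ) (i : Fin g) :
    cI σ ε (bmap σ ε (p, q)).1 (bmap σ ε (p, q)).2 i = 2 * (p i + ((σ i).val : ℤ)) := by
  simp only [cI, bmap, tI, sI]
  ring

lemma chi_on_range (p q : Fin g → ℤ) :
    ∏ i, (1 + (-1 : ℂ) ^ (cI σ ε (bmap σ ε (p, q)).1 (bmap σ ε (p, q)).2 i)) = 2 ^ g := by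
  have : ∀ i, (1 + (-1 : ℂ) ^ (cI σ ε (bmap σ ε (p, q)).1 (bmap σ ε (p, q)).2 i)) = 2 := by
    intro i
    rw [cI_bmap, _root_.zpow_mul]
    norm_num
  rw [Finset.prod_congr rfl fun i _ => this i]
  simp

lemma chi_zero (n m : Fin g → ℤ) (hnot : (n, m) ∉ Set.range (bmap σ ε)) :
    ∏ i, (1 + (-1 : ℂ) ^ (cI σ ε n m i)) = 0 := by
  by_contra hne
  refine hnot (mem_range σ ε n m fun i => ?_)
  by_contra hodd
  rw [Int.not_even_iff_odd] at hodd
  have hz : (1 + (-1 : ℂ) ^ (cI σ ε n m i)) = 0 := by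
    rw [hodd.neg_one_zpow]; ring
  exact hne (Finset.prod_eq_zero (Finset.mem_univ i) hz)

lemma ee_int_half (k : ℤ) : ee ((k : ℂ) / 2) = (-1 : ℂ) ^ k := by
  rw [ee]
  have h : 2 * (Real.pi : ℂ) * Complex.I * ((k : ℂ) / 2) = (k : ℤ) * ((Real.pi : ℂ) * Complex.I) := by
    push_cast; ring
  rw [h, Complex.exp_int_mul, Complex.exp_pi_mul_I]

lemma ee_sum {s : Finset (Fin g)} (f : Fin g → ℂ) :
    ee (∑ i ∈ s, f i) = ∏ i ∈ s, ee (f i) := by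
  rw [ee, Finset.mul_sum, Complex.exp_sum]
  rfl

lemma sum_zmod_two (F : ZMod 2 → ℂ) : ∑ x : ZMod 2, F x = F 0 + F 1 := by
  exact Fin.sum_univ_two F

lemma char_sum (n m : Fin g → ℤ) :
    ∑ ε' : Fin g → ZMod 2,
      ((-1 : ℂ) ^ ((fun i => ((σ i).val : ℤ)) ⬝ᵥ (fun i => ((ε' i).val : ℤ))) *
        ee ((vc ε n + vc ε m) ⬝ᵥ wc ε'))
      = ∏ i, (1 + (-1 : ℂ) ^ (cI σ ε n m i)) := by
  classical
  set h : Fin g → ZMod 2 → ℂ := fun i x =>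
    (-1 : ℂ) ^ ((σ i).val * x.val) * ee ((vc ε n i + vc ε m i) * ((x.val : ℂ) / 2)) with hh
  have hsummand : ∀ ε' : Fin g → ZMod 2,
      (-1 : ℂ) ^ ((fun i => ((σ i).val : ℤ)) ⬝ᵥ (fun i => ((ε' i).val : ℤ))) *
        ee ((vc ε n + vc ε m) ⬝ᵥ wc ε') = ∏ i, h i (ε' i) := by
    intro ε'
    have hd : (fun i => ((σ i).val : ℤ)) ⬝ᵥ (fun i => ((ε' i).val : ℤ))
        = ((∑ i, (σ i).val * (ε' i).val : ℕ) : ℤ) := by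
      rw [dotProduct]
      push_cast
      rfl
    have hsign : (-1 : ℂ) ^ ((fun i => ((σ i).val : ℤ)) ⬝ᵥ (fun i => ((ε' i).val : ℤ)))
        = ∏ i, (-1 : ℂ) ^ ((σ i).val * (ε' i).val) := by
      rw [hd, zpow_natCast, ← Finset.prod_pow_eq_pow_sum]
    have hee : ee ((vc ε n + vc ε m) ⬝ᵥ wc ε')
        = ∏ i, ee ((vc ε n i + vc ε m i) * (((ε' i).val : ℂ) / 2)) := by
      rw [dotProduct, ee_sum]
      rfl
    rw [hsign, hee, ← Finset.prod_mul_distrib]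
  rw [Finset.sum_congr rfl fun ε' _ => hsummand ε']
  rw [← Fintype.prod_sum h]
  refine Finset.prod_congr rfl fun i _ => ?_
  rw [sum_zmod_two]
  have h0 : h i 0 = 1 := by
    simp only [hh, ZMod.val_zero, Nat.mul_zero, pow_zero, Nat.cast_zero, zero_div, mul_zero,
      one_mul, ee, Complex.exp_zero]
  have h1 : h i 1 = (-1 : ℂ) ^ (((σ i).val : ℤ) + (n i + m i + ((ε i).val : ℤ))) := by
    have hv1 : (1 : ZMod 2).val = 1 := rfl
    simp only [hh, hv1, Nat.mul_one, Nat.cast_one]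
    have harg : (vc ε n i + vc ε m i) * ((1 : ℂ) / 2)
        = (((n i + m i + ((ε i).val : ℤ)) : ℤ) : ℂ) / 2 := by
      simp only [vc]
      push_cast
      ring
    rw [harg, ee_int_half, ← zpow_natCast (-1 : ℂ) ((σ i).val),
      ← zpow_add₀ (by norm_num : (-1 : ℂ) ≠ 0)]
  rw [h0, h1]
  congr 1
  congr 1
  simp only [cI]
  ring

end Main
end RBR

namespace RBR
section Sum
variable {g : ℕ}

lemma summable_norm_theta' {M : Matrix (Fin g) (Fin g) ℂ}
    (hM : ∃ c > 0, ∀ x : Fin g → ℝ,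
      c * (∑ i, x i ^ 2) ≤ x ⬝ᵥ ((M.map Complex.im) *ᵥ x)) (a b : Fin g → ZMod 2) :
    Summable fun n : Fin g → ℤ =>
      ‖ee ((1 / 2) * Qf M (vc a n) + vc a n ⬝ᵥ wc b)‖ := by
  refine (summable_norm_theta hM (fun i => ((a i).val : ℝ) / 2)
    (fun i => ((b i).val : ℝ) / 2)).congr fun n => ?_
  have hv : (fun i => (n i : ℂ) + ((((a i).val : ℝ) / 2 : ℝ) : ℂ)) = vc a n := by
    funext i; simp only [vc]; push_cast; ring
  have hw : (fun i => ((((b i).val : ℝ) / 2 : ℝ) : ℂ)) = wc b := by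
    funext i; simp only [wc]; push_cast; ring
  rw [hv, hw]
  rfl

end Sum

section Main2
variable {g : ℕ} (σ ε : Fin g → ZMod 2) (τ : Matrix (Fin g) (Fin g) ℂ)

lemma term2_eq (a : Fin g → ZMod 2) (n : Fin g → ℤ) :
    ee ((1 / 2) * Qf ((2 : ℂ) • τ) (vc a n) + vc a n ⬝ᵥ wc 0) = ee (Qf τ (vc a n)) := by
  congr 1
  have h0 : wc (0 : Fin g → ZMod 2) = (0 : Fin g → ℂ) := by
    funext i; simp [wc]
  rw [h0, dotProduct_zero, add_zero, Qf, Qf, smul_mulVec, dotProduct_smul]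
  simp [smul_eq_mul]

lemma so_eq' (a : Fin g → ZMod 2) :
    secondOrderTheta g a τ = ∑' n : Fin g → ℤ, ee (Qf τ (vc a n)) := by
  rw [secondOrderTheta, theta_eq]
  exact tsum_congr fun n => term2_eq τ a n

lemma lb2 (hτpos : (τ.map Complex.im).PosDef) :
    ∃ c > 0, ∀ x : Fin g → ℝ,
      c * (∑ i, x i ^ 2) ≤ x ⬝ᵥ ((((2 : ℂ) • τ).map Complex.im) *ᵥ x) := by
  obtain ⟨c₀, hc₀, hb⟩ := quad_lb hτpos
  have hmap : ((2 : ℂ) • τ).map Complex.im = (2 : ℝ) • (τ.map Complex.im) := by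
    ext i j
    simp [Matrix.map_apply, Matrix.smul_apply, smul_eq_mul, Complex.mul_im]
  refine ⟨c₀, hc₀, fun x => ?_⟩
  rw [hmap, smul_mulVec, dotProduct_smul, smul_eq_mul]
  have := hb x
  have hq : 0 ≤ x ⬝ᵥ ((τ.map Complex.im) *ᵥ x) := by
    have hs : 0 ≤ c₀ * (∑ i, x i ^ 2) := by positivity
    linarith
  linarith

end Main2
end RBR

open RBR in
/-- Riemann's bilinear relations: for all σ, ε ∈ 𝔽₂^g and τ ∈ ℍ_g,
Θ[σ](τ)·Θ[σ+ε](τ) = 2^{-g} Σ_{ε'∈𝔽₂^g} (-1)^{ᵗσε'} θ[ε;ε'](τ)². -/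
theorem riemann_bilinear_relation (σ ε : Fin g → ZMod 2)
    (τ : Matrix (Fin g) (Fin g) ℂ) (hτsymm : τᵀ = τ)
    (hτpos : (τ.map Complex.im).PosDef) :
    secondOrderTheta g σ τ * secondOrderTheta g (σ + ε) τ =
      (2 : ℂ) ^ (-(g : ℤ)) *
        ∑ ε' : Fin g → ZMod 2,
          (-1 : ℂ) ^ ((fun i => ((σ i).val : ℤ)) ⬝ᵥ (fun i => ((ε' i).val : ℤ))) *
            (thetaConst g ε ε' τ) ^ 2 := by
  classical
  have hlbτ : ∃ c > 0, ∀ x : Fin g → ℝ,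
      c * (∑ i, x i ^ 2) ≤ x ⬝ᵥ ((τ.map Complex.im) *ᵥ x) := quad_lb hτpos
  have hlb2 := lb2 τ hτpos
  have hθ : ∀ a b : Fin g → ZMod 2, Summable fun n : Fin g → ℤ =>
      ‖ee ((1 / 2) * Qf τ (vc a n) + vc a n ⬝ᵥ wc b)‖ :=
    fun a b => summable_norm_theta' hlbτ a b
  have hΘ : ∀ a : Fin g → ZMod 2, Summable fun n : Fin g → ℤ =>
      ‖ee (Qf τ (vc a n))‖ := by
    intro a
    refine (summable_norm_theta' hlb2 a 0).congr fun n => ?_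
    rw [term2_eq]
  set G : (Fin g → ℤ) × (Fin g → ℤ) → ℂ := fun nm =>
    ee ((1 / 2) * Qf τ (vc ε nm.1) + (1 / 2) * Qf τ (vc ε nm.2)) *
      ∏ i, (1 + (-1 : ℂ) ^ (cI σ ε nm.1 nm.2 i)) with hGdef
  have h2g : (2 : ℂ) ^ (-(g : ℤ)) * (2 : ℂ) ^ g = 1 := by
    rw [_root_.zpow_neg, zpow_natCast]
    exact inv_mul_cancel₀ (pow_ne_zero g two_ne_zero)
  -- LHS computation
  have hL : secondOrderTheta g σ τ * secondOrderTheta g (σ + ε) τ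
      = (2 : ℂ) ^ (-(g : ℤ)) * ∑' nm : (Fin g → ℤ) × (Fin g → ℤ), G nm := by
    rw [so_eq', so_eq', tsum_mul_tsum_of_summable_norm (hΘ σ) (hΘ (σ + ε))]
    have hterm : ∀ pq : (Fin g → ℤ) × (Fin g → ℤ),
        ee (Qf τ (vc σ pq.1)) * ee (Qf τ (vc (σ + ε) pq.2))
          = (2 : ℂ) ^ (-(g : ℤ)) * G (bmap σ ε pq) := by
      rintro ⟨p, q⟩
      rw [hGdef]
      simp only
      rw [chi_on_range σ ε p q, exp_eq σ ε τ p q,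
        mul_comm (ee _) ((2 : ℂ) ^ g), ← mul_assoc, h2g, one_mul]
    rw [tsum_congr hterm, tsum_mul_left]
    congr 1
    refine Function.Injective.tsum_eq (bmap_inj σ ε) ?_
    intro nm hnm
    by_contra hr
    refine hnm ?_
    rw [hGdef]
    simp only
    rw [chi_zero σ ε nm.1 nm.2 (by simpa using hr), mul_zero]
  -- RHS computation
  have hR : (∑ ε' : Fin g → ZMod 2,
      (-1 : ℂ) ^ ((fun i => ((σ i).val : ℤ)) ⬝ᵥ (fun i => ((ε' i).val : ℤ))) *
        (thetaConst g ε ε' τ) ^ 2)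
      = ∑' nm : (Fin g → ℤ) × (Fin g → ℤ), G nm := by
    set F : (Fin g → ZMod 2) → ((Fin g → ℤ) × (Fin g → ℤ)) → ℂ := fun ε' nm =>
      (-1 : ℂ) ^ ((fun i => ((σ i).val : ℤ)) ⬝ᵥ (fun i => ((ε' i).val : ℤ))) *
        (ee ((1 / 2) * Qf τ (vc ε nm.1) + vc ε nm.1 ⬝ᵥ wc ε') *
          ee ((1 / 2) * Qf τ (vc ε nm.2) + vc ε nm.2 ⬝ᵥ wc ε')) with hF
    have hFs : ∀ ε' ∈ (Finset.univ : Finset (Fin g → ZMod 2)), Summable (F ε') :=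
      fun ε' _ => (summable_mul_of_summable_norm (hθ ε ε') (hθ ε ε')).mul_left _
    have step1 : ∀ ε' : Fin g → ZMod 2,
        (-1 : ℂ) ^ ((fun i => ((σ i).val : ℤ)) ⬝ᵥ (fun i => ((ε' i).val : ℤ))) *
          (thetaConst g ε ε' τ) ^ 2 = ∑' nm : (Fin g → ℤ) × (Fin g → ℤ), F ε' nm := by
      intro ε'
      rw [sq, theta_eq, tsum_mul_tsum_of_summable_norm (hθ ε ε') (hθ ε ε'),
        ← tsum_mul_left]
    rw [Finset.sum_congr rfl fun ε' _ => step1 ε', ← Summable.tsum_finsetSum hFs]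
    refine tsum_congr fun nm => ?_
    rw [hGdef]
    simp only
    rw [← char_sum σ ε nm.1 nm.2, Finset.mul_sum]
    refine Finset.sum_congr rfl fun ε' _ => ?_
    rw [hF]
    simp only
    rw [ee_mul, mul_left_comm, ee_mul]
    congr 2
    rw [add_dotProduct]
    ring
  rw [hL, hR]
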